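/- If a vector ψ in C^d satisfies the almost flat Ansatz ψ = N(√x₀, v₁, …, v_{d−1}) with x₀ = −2−√(d+1), |v_j| = 1, v_{−j} = −v_j*, and N² = 1/(d−1−x₀), then for every k ≠ 0 (mod d), √(d+1)·⟨ψ|Z^k|ψ⟩ = 1. -/

import Mathlib

open Matrix Finset ComplexConjugate

noncomputable section

/-- ω = exp(2πi/d) -/
def omg (d : ℕ) : ℂ := Complex.exp (2 * Real.pi * Complex.I / d)

/-- τ = -exp(πi/d) -/
def tau (d : ℕ) : ℂ := -Complex.exp (Real.pi * Complex.I / d)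

/-- The clock matrix `Z`, with `Z|r⟩ = ω^r |r⟩`. -/
def Zmat (d : ℕ) [NeZero d] : Matrix (ZMod d) (ZMod d) ℂ :=
  Matrix.diagonal fun r => omg d ^ r.val

/-- The shift matrix `X`, with `X|r⟩ = |r+1⟩` (indices mod d). -/
def Xmat (d : ℕ) [NeZero d] : Matrix (ZMod d) (ZMod d) ℂ :=
  Matrix.of fun r s => if r = s + 1 then 1 else 0

/-- The displacement operators `D_{j,k} = τ^{jk} X^j Z^k`. -/
def Dmat (d : ℕ) [NeZero d] (j k : ZMod d) : Matrix (ZMod d) (ZMod d) ℂ :=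
  tau d ^ (j.val * k.val) • (Xmat d ^ j.val * Zmat d ^ k.val)

/-- Standard Hermitian inner product, conjugate-linear in the first argument. -/
def ip {d : ℕ} [NeZero d] (u w : ZMod d → ℂ) : ℂ := ∑ k, conj (u k) * w k

/-- a vector obeying the almost flat Ansatz satisfies
`√(d+1)⟨ψ|Z^k|ψ⟩ = 1` for every k ≠ 0 (mod d). -/
theorem zoverlap_of_ansatz (d : ℕ) [NeZero d] (hd : 2 ≤ d)
    (N : ℝ) (hNpos : 0 < N)
    (hN : N ^ 2 = 1 / ((d : ℝ) - 1 - (-2 - Real.sqrt (d + 1))))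
    (v ψ : ZMod d → ℂ)
    (hψ : ∀ r, ψ r = (N : ℂ) * v r)
    (hv0 : v 0 = Complex.I * Real.sqrt (2 + Real.sqrt (d + 1)))
    (hvmod : ∀ j : ZMod d, j ≠ 0 → ‖v j‖ = 1)
    (hvneg : ∀ j : ZMod d, j ≠ 0 → v (-j) = -conj (v j)) :
    ∀ k : ZMod d, k ≠ 0 →
      (Real.sqrt (d + 1) : ℂ) * ip ψ ((Zmat d ^ k.val) *ᵥ ψ) = 1 := by
  intro k hk
  have hd1 : (0:ℝ) < (d:ℝ) + 1 := by positivity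
  set s : ℝ := Real.sqrt ((d:ℝ) + 1) with hs
  have hs2 : s ^ 2 = (d:ℝ) + 1 := Real.sq_sqrt (le_of_lt hd1)
  have hspos : 0 < s := Real.sqrt_pos.mpr hd1
  have hprim : IsPrimitiveRoot (omg d) d := by
    simpa [omg] using Complex.isPrimitiveRoot_exp d (NeZero.ne d)
  set ζ : ℂ := omg d ^ k.val with hζ
  have hkval : k.val < d := ZMod.val_lt k
  have hkne : k.val ≠ 0 := by
    intro h
    exact hk ((ZMod.val_eq_zero k).mp h)
  have hζd : ζ ^ d = 1 := by
    rw [hζ, ← pow_mul, mul_comm, pow_mul, hprim.pow_eq_one, one_pow]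
  have hζne : ζ ≠ 1 := by
    intro h
    have hdvd : d ∣ k.val := hprim.dvd_of_pow_eq_one k.val h
    exact hkne (Nat.eq_zero_of_dvd_of_lt hdvd hkval)
  -- geometric sum over ZMod d
  have hrange : ∑ i ∈ Finset.range d, ζ ^ i = 0 := by
    rw [geom_sum_eq hζne, hζd, sub_self, zero_div]
  have hsum : ∑ r : ZMod d, ζ ^ r.val = 0 := by
    rw [← hrange]
    apply Finset.sum_nbij' (fun r : ZMod d => r.val) (fun i : ℕ => (i : ZMod d))
    · intro r _; exact Finset.mem_range.mpr (ZMod.val_lt r)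
    · intro i _; exact Finset.mem_univ _
    · intro r _; exact ZMod.natCast_rightInverse r
    · intro i hi; exact ZMod.val_cast_of_lt (Finset.mem_range.mp hi)
    · intro r _; rfl
  -- the inner product as a sum
  have hdiag : (Zmat d ^ k.val) = Matrix.diagonal fun r : ZMod d => ζ ^ r.val := by
    rw [Zmat, Matrix.diagonal_pow]
    ext r t
    simp only [Matrix.diagonal_apply, Pi.pow_apply, hζ]
    rw [← pow_mul, ← pow_mul, mul_comm]
  have hterm : ∀ r : ZMod d, conj (ψ r) * ((ζ ^ r.val) * ψ r)
      = (N:ℂ)^2 * (conj (v r) * v r) * ζ ^ r.val := by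
    intro r
    rw [hψ r]
    simp only [_root_.map_mul, Complex.conj_ofReal]
    ring
  have hip : ip ψ ((Zmat d ^ k.val) *ᵥ ψ)
      = ∑ r : ZMod d, (N:ℂ)^2 * (conj (v r) * v r) * ζ ^ r.val := by
    rw [hdiag, ip]
    refine Finset.sum_congr rfl fun r _ => ?_
    rw [Matrix.mulVec_diagonal, hterm r]
  -- value at 0 and elsewhere
  have h2s : (0:ℝ) ≤ 2 + s := by positivity
  have hv0sq : conj (v 0) * v 0 = ((2 + s : ℝ) : ℂ) := by
    rw [show (starRingEnd ℂ) (v 0) * v 0 = ((Complex.normSq (v 0) : ℝ) : ℂ) from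
      (Complex.normSq_eq_conj_mul_self).symm ▸ rfl]
    congr 1
    rw [hv0, Complex.normSq_mul, Complex.normSq_I, one_mul, Complex.normSq_ofReal,
      Real.mul_self_sqrt h2s]
  have hvrsq : ∀ r : ZMod d, r ≠ 0 → conj (v r) * v r = 1 := by
    intro r hr
    have h1 : Complex.normSq (v r) = 1 := by
      have := hvmod r hr
      rw [← Complex.sq_norm, this, one_pow]
    rw [← Complex.normSq_eq_conj_mul_self, h1, Complex.ofReal_one]
  have hsplit : ∑ r : ZMod d, (N:ℂ)^2 * (conj (v r) * v r) * ζ ^ r.val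
      = (N:ℂ)^2 * ((1 + s : ℝ) : ℂ) := by
    rw [← Finset.add_sum_erase _ _ (Finset.mem_univ (0 : ZMod d))]
    have he : ∑ r ∈ Finset.univ.erase (0 : ZMod d),
        (N:ℂ)^2 * (conj (v r) * v r) * ζ ^ r.val
        = (N:ℂ)^2 * ∑ r ∈ Finset.univ.erase (0 : ZMod d), ζ ^ r.val := by
      rw [Finset.mul_sum]
      refine Finset.sum_congr rfl fun r hr => ?_
      rw [hvrsq r (Finset.mem_erase.mp hr).1]
      ring
    have he2 : ∑ r ∈ Finset.univ.erase (0 : ZMod d), ζ ^ r.val = -1 := by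
      have := Finset.add_sum_erase _ (fun r : ZMod d => ζ ^ r.val)
        (Finset.mem_univ (0 : ZMod d))
      rw [hsum] at this
      have h0 : ζ ^ (0 : ZMod d).val = 1 := by
        simp [ZMod.val_zero]
      linear_combination this - h0
    rw [he, he2, hv0sq, ZMod.val_zero, pow_zero]
    push_cast
    ring
  rw [hip, hsplit]
  have hden : (d:ℝ) - 1 - (-2 - s) = s * (s + 1) := by nlinarith [hs2]
  have hNval : N ^ 2 = 1 / (s * (s + 1)) := by rw [hN, hden]
  have hsne : s * (s + 1) ≠ 0 := by positivity
  have hreal : s * (N ^ 2 * (1 + s)) = 1 := by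
    rw [hNval]
    field_simp
    ring
  calc (s : ℂ) * ((N:ℂ)^2 * ((1 + s : ℝ) : ℂ))
      = ((s * (N ^ 2 * (1 + s)) : ℝ) : ℂ) := by push_cast; ring
    _ = 1 := by rw [hreal]; norm_num
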